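/- Divisor theory for A(G): Let G = (V,E,r) be a graph. Let I = {(e,v) ∈ E × V : e ∼ v} (so |I| = 2|E|) and let V₀ = {v ∈ V : no edge is incident with v} be the set of isolated vertices. Define φ : A(G) → (E → ℕ) × (I → ℕ) × (V₀ → ℕ) by φ(a) = (e ↦ a_E e, (e,v) ↦ a_V v − a_E e, v ↦ a_V v). Then: (i) φ is an injective additive monoid homomorphism; (ii) the image of φ is exactly the set of triples (f, g, h) satisfying g(e,v) + f(e) = g(e',v) + f(e') whenever e and e' are both incident with v; (iii) φ is a divisor homomorphism: if φ(a) ≤ φ(b) pointwise, then b = a + c for some c ∈ A(G); and (iv) for every standard basis vector δ of (E → ℕ) × (I → ℕ) × (V₀ → ℕ), there exist a, b ∈ A(G) with δ equal to the pointwise minimum of φ(a) and φ(b). (Hence A(G) is a finitely generated reduced Krull monoid whose divisor theory has 3|E| + |V₀| prime divisors.) -/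

import Mathlib

/-- An agglomeration on the graph given by `r : E → Sym2 V`. -/
def IsAgg {V E : Type*} (r : E → Sym2 V) (a : (V → ℕ) × (E → ℕ)) : Prop :=
  ∀ (e : E) (v : V), v ∈ r e → a.2 e ≤ a.1 v

/-- **Divisor theory for `A(G)`**: the map
`φ(a) = (e ↦ a_E e, (e,v) ↦ a_V v − a_E e, v₀ ↦ a_V v₀)` (the last component running over
isolated vertices) is an injective additive divisor homomorphism into a free monoid,
its image is cut out by the stated linear equations, and every standard basis vector is a
pointwise minimum of two elements of the image.  Hence `A(G)` is a finitely generated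
reduced Krull monoid whose divisor theory has `3|E| + |V₀|` prime divisors. -/
theorem divisor_theory {V E : Type*} [Fintype V] [Fintype E]
    [DecidableEq V] [DecidableEq E]
    (r : E → Sym2 V) (hr : ∀ e : E, ¬ (r e).IsDiag)
    (φ : ((V → ℕ) × (E → ℕ)) →
      (E → ℕ) × ({p : E × V // p.2 ∈ r p.1} → ℕ) × ({v : V // ∀ e : E, v ∉ r e} → ℕ))
    (hφ : ∀ a : (V → ℕ) × (E → ℕ),
      φ a = (fun e => a.2 e, fun p => a.1 p.1.2 - a.2 p.1.1, fun v => a.1 v.1)) :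
    -- (i) additive and injective on agglomerations
    (∀ a b : (V → ℕ) × (E → ℕ), IsAgg r a → IsAgg r b → φ (a + b) = φ a + φ b) ∧
    (∀ a b : (V → ℕ) × (E → ℕ), IsAgg r a → IsAgg r b → φ a = φ b → a = b) ∧
    -- (ii) description of the image
    (∀ (f : E → ℕ) (g : {p : E × V // p.2 ∈ r p.1} → ℕ) (h : {v : V // ∀ e : E, v ∉ r e} → ℕ),
      (∃ a : (V → ℕ) × (E → ℕ), IsAgg r a ∧ φ a = (f, g, h)) ↔
        ∀ (e e' : E) (v : V) (he : v ∈ r e) (he' : v ∈ r e'),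
          g ⟨(e, v), he⟩ + f e = g ⟨(e', v), he'⟩ + f e') ∧
    -- (iii) divisor homomorphism
    (∀ a b : (V → ℕ) × (E → ℕ), IsAgg r a → IsAgg r b → φ a ≤ φ b →
      ∃ c : (V → ℕ) × (E → ℕ), IsAgg r c ∧ b = a + c) ∧
    -- (iv) standard basis vectors are minima of pairs from the image
    (∀ δ : (E → ℕ) × ({p : E × V // p.2 ∈ r p.1} → ℕ) × ({v : V // ∀ e : E, v ∉ r e} → ℕ),
      ((∃ e₀ : E, δ = (Pi.single e₀ 1, 0, 0)) ∨
       (∃ p₀ : {p : E × V // p.2 ∈ r p.1}, δ = (0, Pi.single p₀ 1, 0)) ∨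
       (∃ v₀ : {v : V // ∀ e : E, v ∉ r e}, δ = (0, 0, Pi.single v₀ 1))) →
      ∃ a b : (V → ℕ) × (E → ℕ), IsAgg r a ∧ IsAgg r b ∧ δ = φ a ⊓ φ b) := by
  classical
  refine ⟨?_, ?_, ?_, ?_, ?_⟩
  -- (i) additivity
  · intro a b ha hb
    simp only [hφ, Prod.mk_add_mk, Prod.mk.injEq]
    refine ⟨funext fun e => ?_, funext fun p => ?_, funext fun v => ?_⟩
    · simp [Prod.snd_add]
    · obtain ⟨⟨e, v⟩, he⟩ := p
      have h1 := ha e v he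
      have h2 := hb e v he
      simp only [Pi.add_apply, Prod.fst_add, Prod.snd_add]
      omega
    · simp [Prod.fst_add]
  -- (i') injectivity
  · intro a b ha hb heq
    rw [hφ, hφ, Prod.mk.injEq, Prod.mk.injEq] at heq
    obtain ⟨h1, h2, h3⟩ := heq
    have h1' : ∀ e, a.2 e = b.2 e := fun e => congrFun h1 e
    refine Prod.ext (funext fun v => ?_) (funext h1')
    by_cases hv : ∃ e, v ∈ r e
    · obtain ⟨e, he⟩ := hv
      have := congrFun h2 ⟨(e, v), he⟩
      have ha' := ha e v he
      have hb' := hb e v he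
      have := h1' e
      simp only at *
      omega
    · push_neg at hv
      exact congrFun h3 ⟨v, hv⟩
  -- (ii) description of the image
  · intro f g h
    constructor
    · rintro ⟨a, ha, hfa⟩
      rw [hφ, Prod.mk.injEq, Prod.mk.injEq] at hfa
      obtain ⟨h1, h2, _⟩ := hfa
      intro e e' v he he'
      have g1 := congrFun h2 ⟨(e, v), he⟩
      have g2 := congrFun h2 ⟨(e', v), he'⟩
      have f1 := congrFun h1 e
      have f2 := congrFun h1 e'
      have a1 := ha e v he
      have a2 := ha e' v he'
      simp only at *
      omega
    · intro hcomp
      refine ⟨⟨fun v => if hv : ∃ e, v ∈ r e then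
          g ⟨(hv.choose, v), hv.choose_spec⟩ + f hv.choose
        else h ⟨v, fun e he => hv ⟨e, he⟩⟩, f⟩, ?_, ?_⟩
      · intro e v he
        simp only
        rw [dif_pos ⟨e, he⟩]
        have hv : ∃ e, v ∈ r e := ⟨e, he⟩
        have := hcomp hv.choose e v hv.choose_spec he
        omega
      · rw [hφ, Prod.mk.injEq, Prod.mk.injEq]
        refine ⟨rfl, funext fun p => ?_, funext fun v => ?_⟩
        · obtain ⟨⟨e, v⟩, he⟩ := p
          simp only
          rw [dif_pos ⟨e, he⟩]
          have hv : ∃ e, v ∈ r e := ⟨e, he⟩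
          have := hcomp hv.choose e v hv.choose_spec he
          omega
        · obtain ⟨v, hv⟩ := v
          simp only
          rw [dif_neg (by push_neg; exact hv)]
  -- (iii) divisor homomorphism
  · intro a b ha hb hle
    rw [hφ, hφ, Prod.mk_le_mk, Prod.mk_le_mk] at hle
    obtain ⟨h1, h2, h3⟩ := hle
    have key : ∀ v, a.1 v ≤ b.1 v := by
      intro v
      by_cases hv : ∃ e, v ∈ r e
      · obtain ⟨e, he⟩ := hv
        have := h2 ⟨(e, v), he⟩
        have ha' := ha e v he
        have hb' := hb e v he
        have := h1 e
        simp only at *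
        omega
      · push_neg at hv
        exact h3 ⟨v, hv⟩
    refine ⟨⟨fun v => b.1 v - a.1 v, fun e => b.2 e - a.2 e⟩, ?_, ?_⟩
    · intro e v he
      have := h2 ⟨(e, v), he⟩
      have ha' := ha e v he
      have hb' := hb e v he
      have := h1 e
      have := key v
      simp only at *
      omega
    · refine Prod.ext (funext fun v => ?_) (funext fun e => ?_)
      · have := key v
        simp only [Prod.fst_add, Pi.add_apply]
        omega
      · have := h1 e
        simp only [Prod.snd_add, Pi.add_apply] at *
        omega
  -- (iv) basis vectors
  · rintro δ (⟨e₀, rfl⟩ | ⟨⟨⟨e₀, v₀⟩, h₀⟩, rfl⟩ | ⟨⟨v₀, hv₀⟩, rfl⟩)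
    · refine ⟨⟨fun v => if v ∈ r e₀ then 1 else 0, Pi.single e₀ 1⟩,
        ⟨fun _ => 1, fun _ => 1⟩, ?_, ?_, ?_⟩
      · intro e v he
        simp only [Pi.single_apply]
        split_ifs with h1 h2
        · omega
        · exact absurd (h1 ▸ he) h2
        · omega
        · omega
      · intro e v he; exact le_refl 1
      · rw [hφ, hφ, Prod.inf_def, Prod.inf_def]
        refine Prod.ext (funext fun e => ?_) (Prod.ext (funext fun p => ?_)
          (funext fun v => ?_)) <;> simp only [Pi.inf_apply, Pi.single_apply]
        · split_ifs <;> simp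
        · obtain ⟨⟨e, v⟩, he⟩ := p
          simp only [Pi.zero_apply]
          split_ifs <;> omega
        · obtain ⟨v, hv⟩ := v
          simp only [Pi.zero_apply]
          rw [if_neg (hv e₀)]
          simp
    · refine ⟨⟨Pi.single v₀ 1, 0⟩,
        ⟨fun _ => 1, fun e => if e = e₀ then 0 else 1⟩, ?_, ?_, ?_⟩
      · intro e v he; simp
      · intro e v he
        show (if e = e₀ then 0 else 1) ≤ 1
        split_ifs <;> omega
      · rw [hφ, hφ, Prod.inf_def, Prod.inf_def]
        refine Prod.ext (funext fun e => ?_) (Prod.ext (funext fun p => ?_)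
          (funext fun v => ?_)) <;>
          simp only [Pi.inf_apply, Pi.single_apply, Pi.zero_apply, Prod.fst_zero,
            Prod.snd_zero]
        · split_ifs <;> simp
        · obtain ⟨⟨e, v⟩, he⟩ := p
          have hsub : (⟨(e, v), he⟩ : {p : E × V // p.2 ∈ r p.1}) = ⟨(e₀, v₀), h₀⟩ ↔
              e = e₀ ∧ v = v₀ := by
            rw [Subtype.mk.injEq, Prod.mk.injEq]
          simp only [hsub]
          split_ifs <;> simp_all
        · obtain ⟨v, hv⟩ := v
          rw [if_neg (fun hvv : v = v₀ => hv e₀ (hvv ▸ h₀))]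
          simp
    · refine ⟨⟨Pi.single v₀ 1, 0⟩, ⟨Pi.single v₀ 1, 0⟩, ?_, ?_, ?_⟩
      · intro e v he; simp
      · intro e v he; simp
      · rw [hφ, inf_idem]
        refine Prod.ext rfl (Prod.ext (funext fun p => ?_) (funext fun w => ?_))
        · obtain ⟨⟨e, v⟩, he⟩ := p
          have hvv : v ≠ v₀ := fun hvv => hv₀ e (hvv ▸ he)
          simp [Pi.single_apply, hvv]
        · obtain ⟨v, hv⟩ := w
          simp [Pi.single_apply, Subtype.mk.injEq]
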